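/- Let n ≥ 6, 0 < i < j < n/2, gcd(n,i,j) = 1, i+j ≠ n/2, and suppose none of 4i ≡ 0, 4j ≡ 0, 3i ≡ ±j, 3j ≡ ±i holds mod n. Then in C_n(i,j), for every vertex a: N(a) ∩ N(a+2i) = {a+i}, N(a) ∩ N(a+2j) = {a+j}, N(a) ∩ N(a+i+j) = {a+i, a+j}, and N(a) ∩ N(a+i-j) = {a+i, a-j}. -/

import Mathlib

/-- The two-generator circulant graph `C_n(i,j)` on `ℤ/nℤ`:
distinct `a, b` are adjacent iff `a - b ∈ {i, -i, j, -j}`. -/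
def circulant (n : ℕ) (i j : ZMod n) : SimpleGraph (ZMod n) where
  Adj a b := a ≠ b ∧ (a - b = i ∨ a - b = -i ∨ a - b = j ∨ a - b = -j)
  symm := by
    constructor
    rintro a b ⟨hab, h⟩
    refine ⟨fun h' => hab h'.symm, ?_⟩
    have hba : b - a = -(a - b) := by ring
    rcases h with h | h | h | h <;> rw [hba, h] <;> simp
  loopless := by constructor; rintro a ⟨h, -⟩; exact h rfl

set_option maxHeartbeats 2000000 in
theorem stmt_14 (n i j : ℕ) (hn : 6 ≤ n) (hi : 0 < i) (hij : i < j)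
    (hj : 2 * j < n) (hgcd : Nat.gcd n (Nat.gcd i j) = 1)
    (hsum : 2 * (i + j) ≠ n)
    (h4i : (4 * i : ZMod n) ≠ 0) (h4j : (4 * j : ZMod n) ≠ 0)
    (h3i : (3 * i : ZMod n) ≠ (j : ZMod n)) (h3i' : (3 * i : ZMod n) ≠ -(j : ZMod n))
    (h3j : (3 * j : ZMod n) ≠ (i : ZMod n)) (h3j' : (3 * j : ZMod n) ≠ -(i : ZMod n)) :
    ∀ a : ZMod n,
      (circulant n (i : ZMod n) (j : ZMod n)).neighborSet a ∩
          (circulant n (i : ZMod n) (j : ZMod n)).neighborSet (a + 2 * (i : ZMod n)) =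
        {a + (i : ZMod n)} ∧
      (circulant n (i : ZMod n) (j : ZMod n)).neighborSet a ∩
          (circulant n (i : ZMod n) (j : ZMod n)).neighborSet (a + 2 * (j : ZMod n)) =
        {a + (j : ZMod n)} ∧
      (circulant n (i : ZMod n) (j : ZMod n)).neighborSet a ∩
          (circulant n (i : ZMod n) (j : ZMod n)).neighborSet (a + (i : ZMod n) + (j : ZMod n)) =
        {a + (i : ZMod n), a + (j : ZMod n)} ∧
      (circulant n (i : ZMod n) (j : ZMod n)).neighborSet a ∩
          (circulant n (i : ZMod n) (j : ZMod n)).neighborSet (a + (i : ZMod n) - (j : ZMod n)) =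
        {a + (i : ZMod n), a - (j : ZMod n)} := by
  haveI : NeZero n := ⟨by omega⟩
  have cast0 : ∀ k : ℕ, 0 < k → k < n → (k : ZMod n) ≠ 0 := by
    intro k hk1 hk2 h
    rw [ZMod.natCast_eq_zero_iff] at h
    exact absurd (Nat.le_of_dvd hk1 h) (by omega)
  have fI : (i : ZMod n) ≠ 0 := cast0 i hi (by omega)
  have fJ : (j : ZMod n) ≠ 0 := cast0 j (by omega) (by omega)
  have f2I : 2 * (i : ZMod n) ≠ 0 := by
    have h := cast0 (2 * i) (by omega) (by omega)
    intro h'; apply h; push_cast; linear_combination h'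
  have f2J : 2 * (j : ZMod n) ≠ 0 := by
    have h := cast0 (2 * j) (by omega) (by omega)
    intro h'; apply h; push_cast; linear_combination h'
  have fIJ : (i : ZMod n) + (j : ZMod n) ≠ 0 := by
    have h := cast0 (i + j) (by omega) (by omega)
    intro h'; apply h; push_cast; linear_combination h'
  have fJI : (j : ZMod n) - (i : ZMod n) ≠ 0 := by
    have h := cast0 (j - i) (by omega) (by omega)
    intro h'; apply h
    rw [Nat.cast_sub (le_of_lt hij)]; linear_combination h'
  have f2JI : 2 * (j : ZMod n) - 2 * (i : ZMod n) ≠ 0 := by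
    have h := cast0 (2 * j - 2 * i) (by omega) (by omega)
    intro h'; apply h
    rw [Nat.cast_sub (by omega)]; push_cast; linear_combination h'
  have f2IJ : 2 * (i : ZMod n) + 2 * (j : ZMod n) ≠ 0 := by
    intro h'
    have h : ((2 * (i + j) : ℕ) : ZMod n) = 0 := by push_cast; linear_combination h'
    rw [ZMod.natCast_eq_zero_iff] at h
    have h2 : n ≤ 2 * (i + j) := Nat.le_of_dvd (by omega) h
    have h4 : n ∣ 2 * (i + j) - n := Nat.dvd_sub h dvd_rfl
    have h5 : 2 * (i + j) - n = 0 := Nat.eq_zero_of_dvd_of_lt h4 (by omega) |>.symm ▸ rfl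
    omega
  intro a
  refine ⟨?_, ?_, ?_, ?_⟩
  · ext b
    simp only [Set.mem_inter_iff, SimpleGraph.mem_neighborSet, Set.mem_singleton_iff]
    show ((a ≠ b ∧ _) ∧ (a + 2 * (i:ZMod n) ≠ b ∧ _)) ↔ _
    constructor
    · rintro ⟨⟨hab, h1⟩, ⟨hab2, h2⟩⟩
      have key : a + 2 * (i:ZMod n) - b = (i:ZMod n) ∧ a - b = -(i:ZMod n) := by
        rcases h1 with h1 | h1 | h1 | h1 <;> rcases h2 with h2 | h2 | h2 | h2 <;>
          first
            | exact ⟨h2, h1⟩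
            | (exfalso; first
                | exact fI (by linear_combination h2 - h1) | exact fI (by linear_combination h1 - h2)
                | exact fJ (by linear_combination h2 - h1) | exact fJ (by linear_combination h1 - h2)
                | exact f2I (by linear_combination h2 - h1) | exact f2I (by linear_combination h1 - h2)
                | exact f2J (by linear_combination h2 - h1) | exact f2J (by linear_combination h1 - h2)
                | exact fIJ (by linear_combination h2 - h1) | exact fIJ (by linear_combination h1 - h2)
                | exact fJI (by linear_combination h2 - h1) | exact fJI (by linear_combination h1 - h2)
                | exact f2IJ (by linear_combination h2 - h1) | exact f2IJ (by linear_combination h1 - h2)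
                | exact f2JI (by linear_combination h2 - h1) | exact f2JI (by linear_combination h1 - h2)
                | exact h4i (by linear_combination h2 - h1) | exact h4i (by linear_combination h1 - h2)
                | exact h4j (by linear_combination h2 - h1) | exact h4j (by linear_combination h1 - h2)
                | exact h3i (by linear_combination h2 - h1) | exact h3i (by linear_combination h1 - h2)
                | exact h3i' (by linear_combination h2 - h1) | exact h3i' (by linear_combination h1 - h2)
                | exact h3j (by linear_combination h2 - h1) | exact h3j (by linear_combination h1 - h2)
                | exact h3j' (by linear_combination h2 - h1) | exact h3j' (by linear_combination h1 - h2))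
      linear_combination -key.2
    · rintro rfl
      refine ⟨⟨fun h => fI (by linear_combination -h), Or.inr (Or.inl (by ring))⟩,
              ⟨fun h => fI (by linear_combination h), Or.inl (by ring)⟩⟩
  · ext b
    simp only [Set.mem_inter_iff, SimpleGraph.mem_neighborSet, Set.mem_singleton_iff]
    show ((a ≠ b ∧ _) ∧ (a + 2 * (j:ZMod n) ≠ b ∧ _)) ↔ _
    constructor
    · rintro ⟨⟨hab, h1⟩, ⟨hab2, h2⟩⟩
      have key : a + 2 * (j:ZMod n) - b = (j:ZMod n) ∧ a - b = -(j:ZMod n) := by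
        rcases h1 with h1 | h1 | h1 | h1 <;> rcases h2 with h2 | h2 | h2 | h2 <;>
          first
            | exact ⟨h2, h1⟩
            |              (exfalso; first
                | exact fI (by linear_combination h2 - h1) | exact fI (by linear_combination h1 - h2)
                | exact fJ (by linear_combination h2 - h1) | exact fJ (by linear_combination h1 - h2)
                | exact f2I (by linear_combination h2 - h1) | exact f2I (by linear_combination h1 - h2)
                | exact f2J (by linear_combination h2 - h1) | exact f2J (by linear_combination h1 - h2)
                | exact fIJ (by linear_combination h2 - h1) | exact fIJ (by linear_combination h1 - h2)
                | exact fJI (by linear_combination h2 - h1) | exact fJI (by linear_combination h1 - h2)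
                | exact f2IJ (by linear_combination h2 - h1) | exact f2IJ (by linear_combination h1 - h2)
                | exact f2JI (by linear_combination h2 - h1) | exact f2JI (by linear_combination h1 - h2)
                | exact h4i (by linear_combination h2 - h1) | exact h4i (by linear_combination h1 - h2)
                | exact h4j (by linear_combination h2 - h1) | exact h4j (by linear_combination h1 - h2)
                | exact h3i (by linear_combination h2 - h1) | exact h3i (by linear_combination h1 - h2)
                | exact h3i' (by linear_combination h2 - h1) | exact h3i' (by linear_combination h1 - h2)
                | exact h3j (by linear_combination h2 - h1) | exact h3j (by linear_combination h1 - h2)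
                | exact h3j' (by linear_combination h2 - h1) | exact h3j' (by linear_combination h1 - h2))
      linear_combination -key.2
    · rintro rfl
      refine ⟨⟨fun h => fJ (by linear_combination -h), Or.inr (Or.inr (Or.inr (by ring)))⟩,
              ⟨fun h => fJ (by linear_combination h), Or.inr (Or.inr (Or.inl (by ring)))⟩⟩
  · ext b
    simp only [Set.mem_inter_iff, SimpleGraph.mem_neighborSet, Set.mem_insert_iff,
      Set.mem_singleton_iff]
    show ((a ≠ b ∧ _) ∧ (a + (i:ZMod n) + (j:ZMod n) ≠ b ∧ _)) ↔ _
    constructor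
    · rintro ⟨⟨hab, h1⟩, ⟨hab2, h2⟩⟩
      have key : (a + (i:ZMod n) + (j:ZMod n) - b = (i:ZMod n) ∧ a - b = -(j:ZMod n)) ∨
          (a + (i:ZMod n) + (j:ZMod n) - b = (j:ZMod n) ∧ a - b = -(i:ZMod n)) := by
        rcases h1 with h1 | h1 | h1 | h1 <;> rcases h2 with h2 | h2 | h2 | h2 <;>
          first
            | exact Or.inl ⟨h2, h1⟩
            | exact Or.inr ⟨h2, h1⟩
            |              (exfalso; first
                | exact fI (by linear_combination h2 - h1) | exact fI (by linear_combination h1 - h2)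
                | exact fJ (by linear_combination h2 - h1) | exact fJ (by linear_combination h1 - h2)
                | exact f2I (by linear_combination h2 - h1) | exact f2I (by linear_combination h1 - h2)
                | exact f2J (by linear_combination h2 - h1) | exact f2J (by linear_combination h1 - h2)
                | exact fIJ (by linear_combination h2 - h1) | exact fIJ (by linear_combination h1 - h2)
                | exact fJI (by linear_combination h2 - h1) | exact fJI (by linear_combination h1 - h2)
                | exact f2IJ (by linear_combination h2 - h1) | exact f2IJ (by linear_combination h1 - h2)
                | exact f2JI (by linear_combination h2 - h1) | exact f2JI (by linear_combination h1 - h2)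
                | exact h4i (by linear_combination h2 - h1) | exact h4i (by linear_combination h1 - h2)
                | exact h4j (by linear_combination h2 - h1) | exact h4j (by linear_combination h1 - h2)
                | exact h3i (by linear_combination h2 - h1) | exact h3i (by linear_combination h1 - h2)
                | exact h3i' (by linear_combination h2 - h1) | exact h3i' (by linear_combination h1 - h2)
                | exact h3j (by linear_combination h2 - h1) | exact h3j (by linear_combination h1 - h2)
                | exact h3j' (by linear_combination h2 - h1) | exact h3j' (by linear_combination h1 - h2))
      rcases key with ⟨-, h⟩ | ⟨-, h⟩
      · exact Or.inr (by linear_combination -h)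
      · exact Or.inl (by linear_combination -h)
    · rintro (rfl | rfl)
      · exact ⟨⟨fun h => fI (by linear_combination -h), Or.inr (Or.inl (by ring))⟩,
              ⟨fun h => fJ (by linear_combination h), Or.inr (Or.inr (Or.inl (by ring)))⟩⟩
      · exact ⟨⟨fun h => fJ (by linear_combination -h), Or.inr (Or.inr (Or.inr (by ring)))⟩,
              ⟨fun h => fI (by linear_combination h), Or.inl (by ring)⟩⟩
  · ext b
    simp only [Set.mem_inter_iff, SimpleGraph.mem_neighborSet, Set.mem_insert_iff,
      Set.mem_singleton_iff]
    show ((a ≠ b ∧ _) ∧ (a + (i:ZMod n) - (j:ZMod n) ≠ b ∧ _)) ↔ _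
    constructor
    · rintro ⟨⟨hab, h1⟩, ⟨hab2, h2⟩⟩
      have key : (a + (i:ZMod n) - (j:ZMod n) - b = -(j:ZMod n) ∧ a - b = -(i:ZMod n)) ∨
          (a + (i:ZMod n) - (j:ZMod n) - b = (i:ZMod n) ∧ a - b = (j:ZMod n)) := by
        rcases h1 with h1 | h1 | h1 | h1 <;> rcases h2 with h2 | h2 | h2 | h2 <;>
          first
            | exact Or.inl ⟨h2, h1⟩
            | exact Or.inr ⟨h2, h1⟩
            |              (exfalso; first
                | exact fI (by linear_combination h2 - h1) | exact fI (by linear_combination h1 - h2)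
                | exact fJ (by linear_combination h2 - h1) | exact fJ (by linear_combination h1 - h2)
                | exact f2I (by linear_combination h2 - h1) | exact f2I (by linear_combination h1 - h2)
                | exact f2J (by linear_combination h2 - h1) | exact f2J (by linear_combination h1 - h2)
                | exact fIJ (by linear_combination h2 - h1) | exact fIJ (by linear_combination h1 - h2)
                | exact fJI (by linear_combination h2 - h1) | exact fJI (by linear_combination h1 - h2)
                | exact f2IJ (by linear_combination h2 - h1) | exact f2IJ (by linear_combination h1 - h2)
                | exact f2JI (by linear_combination h2 - h1) | exact f2JI (by linear_combination h1 - h2)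
                | exact h4i (by linear_combination h2 - h1) | exact h4i (by linear_combination h1 - h2)
                | exact h4j (by linear_combination h2 - h1) | exact h4j (by linear_combination h1 - h2)
                | exact h3i (by linear_combination h2 - h1) | exact h3i (by linear_combination h1 - h2)
                | exact h3i' (by linear_combination h2 - h1) | exact h3i' (by linear_combination h1 - h2)
                | exact h3j (by linear_combination h2 - h1) | exact h3j (by linear_combination h1 - h2)
                | exact h3j' (by linear_combination h2 - h1) | exact h3j' (by linear_combination h1 - h2))
      rcases key with ⟨-, h⟩ | ⟨-, h⟩
      · exact Or.inl (by linear_combination -h)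
      · exact Or.inr (by linear_combination -h)
    · rintro (rfl | rfl)
      · exact ⟨⟨fun h => fI (by linear_combination -h), Or.inr (Or.inl (by ring))⟩,
              ⟨fun h => fJ (by linear_combination -h), Or.inr (Or.inr (Or.inr (by ring)))⟩⟩
      · exact ⟨⟨fun h => fJ (by linear_combination h), Or.inr (Or.inr (Or.inl (by ring)))⟩,
              ⟨fun h => fI (by linear_combination h), Or.inl (by ring)⟩⟩
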